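/- For a finitely generated ℕ^r-graded module M over S = K[x_1,…,x_r], there exists u_0 ∈ ℕ^r such that rk_S(M) = HF(M,u) for all u ∈ ℕ^r with u ≽ u_0. -/

import Mathlib

open MvPolynomial

set_option linter.unusedSectionVars false
set_option maxHeartbeats 1000000

section Aux

variable {K : Type} [Field K] {r : ℕ}
  {M : Type} [AddCommGroup M] [Module (MvPolynomial (Fin r) K) M]
  [Module K M] [IsScalarTower K (MvPolynomial (Fin r) K) M]
  (ℳ : (Fin r →₀ ℕ) → Submodule K M)

noncomputable def cmpL (hM : DirectSum.IsInternal ℳ) (u : Fin r →₀ ℕ) : M →ₗ[K] M :=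
  (ℳ u).subtype ∘ₗ
    (DirectSum.component K (Fin r →₀ ℕ) (fun v => ℳ v) u) ∘ₗ
    ((LinearEquiv.ofBijective (DirectSum.coeLinearMap ℳ) hM).symm : M →ₗ[K] _)

variable (hM : DirectSum.IsInternal ℳ)

theorem cmpL_mem (u : Fin r →₀ ℕ) (m : M) : cmpL ℳ hM u m ∈ ℳ u :=
  SetLike.coe_mem _

theorem cmpL_of_mem {v : Fin r →₀ ℕ} {m : M} (hm : m ∈ ℳ v) (u : Fin r →₀ ℕ) :
    cmpL ℳ hM u m = if u = v then m else 0 := by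
  classical
  by_cases h : u = v
  · subst h
    simp only [cmpL, LinearMap.coe_comp, Function.comp_apply, LinearEquiv.coe_coe, if_true]
    rw [show (DirectSum.component K (Fin r →₀ ℕ) (fun v => ℳ v) u)
        ((LinearEquiv.ofBijective (DirectSum.coeLinearMap ℳ) hM).symm m)
      = (LinearEquiv.ofBijective (DirectSum.coeLinearMap ℳ) hM).symm m u from rfl]
    rw [hM.ofBijective_coeLinearMap_of_mem hm]
    rfl
  · simp only [cmpL, LinearMap.coe_comp, Function.comp_apply, LinearEquiv.coe_coe, if_neg h]
    rw [show (DirectSum.component K (Fin r →₀ ℕ) (fun v => ℳ v) u)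
        ((LinearEquiv.ofBijective (DirectSum.coeLinearMap ℳ) hM).symm m)
      = (LinearEquiv.ofBijective (DirectSum.coeLinearMap ℳ) hM).symm m u from rfl]
    rw [hM.ofBijective_coeLinearMap_of_mem_ne (Ne.symm h) hm]
    rfl

theorem sum_cmpL [∀ (i : Fin r →₀ ℕ) (x : ℳ i), Decidable (x ≠ 0)] (m : M) :
    (∑ u ∈ ((LinearEquiv.ofBijective (DirectSum.coeLinearMap ℳ) hM).symm m).support,
      cmpL ℳ hM u m) = m := by
  classical
  set D := (LinearEquiv.ofBijective (DirectSum.coeLinearMap ℳ) hM).symm with hD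
  have h1 : DirectSum.coeLinearMap ℳ (D m) = m := by
    rw [hD]
    exact (LinearEquiv.ofBijective (DirectSum.coeLinearMap ℳ) hM).apply_symm_apply m
  conv_rhs => rw [← h1, ← DirectSum.sum_support_of (D m)]
  rw [map_sum]
  apply Finset.sum_congr rfl
  intro u _
  rw [DirectSum.coeLinearMap_of]
  rfl

variable (hMgr : ∀ (u v : Fin r →₀ ℕ) (c : K) (m : M), m ∈ ℳ v →
      (MvPolynomial.monomial u c) • m ∈ ℳ (u + v))

include hMgr in
/-- Key computation: the degree-`u` component of `p • m` for `m` homogeneous of degree `v`. -/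
theorem cmpL_smul (p : MvPolynomial (Fin r) K) {v : Fin r →₀ ℕ} {m : M} (hm : m ∈ ℳ v)
    (u : Fin r →₀ ℕ) :
    cmpL ℳ hM u (p • m) =
      if h : v ≤ u then (monomial (u - v) (coeff (u - v) p)) • m else 0 := by
  classical
  have hps : p • m = ∑ w ∈ p.support, (monomial w (coeff w p)) • m := by
    conv_lhs => rw [p.as_sum]
    rw [Finset.sum_smul]
  rw [hps, map_sum]
  have hterm : ∀ w ∈ p.support, cmpL ℳ hM u ((monomial w (coeff w p)) • m)
      = if u = w + v then (monomial w (coeff w p)) • m else 0 := by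
    intro w _
    exact cmpL_of_mem ℳ hM (hMgr w v (coeff w p) m hm) u
  rw [Finset.sum_congr rfl hterm]
  by_cases h : v ≤ u
  · have hkey : ∀ w : Fin r →₀ ℕ, (u = w + v) ↔ (w = u - v) := by
      intro w
      constructor
      · rintro rfl; rw [add_tsub_cancel_right]
      · rintro rfl; rw [tsub_add_cancel_of_le h]
    rw [Finset.sum_congr rfl (fun w _ => if_congr (hkey w) rfl rfl)]
    rw [Finset.sum_ite_eq' p.support (u - v) (fun w => (monomial w (coeff w p)) • m)]
    rw [dif_pos h]
    by_cases hs : u - v ∈ p.support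
    · rw [if_pos hs]
    · rw [if_neg hs, MvPolynomial.notMem_support_iff.mp hs, map_zero, zero_smul]
  · rw [dif_neg h]
    apply Finset.sum_eq_zero
    intro w _
    rw [if_neg]
    rintro rfl
    exact h (le_add_self)

include hM hMgr in
/-- If `m` is homogeneous of degree `u` and lies in the `S`-span of a finite homogeneous
family, then it lies in the `K`-span of the degree-`u` parts of the multiples. -/
theorem mem_spanK {ι' : Type} [Fintype ι'] (g : ι' → M) (e : ι' → (Fin r →₀ ℕ))
    (hg : ∀ i, g i ∈ ℳ (e i)) {m : M} {u : Fin r →₀ ℕ} (hm : m ∈ ℳ u)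
    (hspan : m ∈ Submodule.span (MvPolynomial (Fin r) K) (Set.range g)) :
    m ∈ Submodule.span K (Set.range (fun i =>
      if _ : e i ≤ u then (monomial (u - e i) (1 : K)) • g i else 0)) := by
  classical
  rw [Submodule.mem_span_range_iff_exists_fun] at hspan
  obtain ⟨c, hc⟩ := hspan
  have h1 : m = cmpL ℳ hM u m := by rw [cmpL_of_mem ℳ hM hm u, if_pos rfl]
  rw [h1, ← hc, map_sum]
  apply Submodule.sum_mem
  intro i _
  rw [cmpL_smul ℳ hM hMgr (c i) (hg i) u]
  by_cases h : e i ≤ u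
  · rw [dif_pos h]
    have h2 : (monomial (u - e i) (coeff (u - e i) (c i))) • g i
        = (coeff (u - e i) (c i)) • ((monomial (u - e i) (1 : K)) • g i) := by
      rw [← smul_assoc, MvPolynomial.smul_monomial, smul_eq_mul, mul_one]
    rw [h2]
    apply Submodule.smul_mem
    apply Submodule.subset_span
    refine ⟨i, ?_⟩
    exact dif_pos h
  · rw [dif_neg h]
    exact Submodule.zero_mem _

include hMgr in
/-- Graded components of elements of the span of a homogeneous family stay in the span. -/
theorem cmpL_mem_span {ι' : Type} [Fintype ι'] (g : ι' → M) (e : ι' → (Fin r →₀ ℕ))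
    (hg : ∀ i, g i ∈ ℳ (e i)) {z : M}
    (hz : z ∈ Submodule.span (MvPolynomial (Fin r) K) (Set.range g)) (u : Fin r →₀ ℕ) :
    cmpL ℳ hM u z ∈ Submodule.span (MvPolynomial (Fin r) K) (Set.range g) := by
  classical
  rw [Submodule.mem_span_range_iff_exists_fun] at hz
  obtain ⟨c, hc⟩ := hz
  rw [← hc, map_sum]
  apply Submodule.sum_mem
  intro i _
  rw [cmpL_smul ℳ hM hMgr (c i) (hg i) u]
  by_cases h : e i ≤ u
  · rw [dif_pos h]
    exact Submodule.smul_mem _ _ (Submodule.subset_span ⟨i, rfl⟩)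
  · rw [dif_neg h]
    exact Submodule.zero_mem _

end Aux



/-- The rank of a module `M` over an integral domain `R`:
`rk_R(M) = dim_Q (M ⊗_R Q)` where `Q` is the fraction field of `R`. -/
noncomputable def rk (R : Type) [CommRing R] (M : Type) [AddCommGroup M] [Module R M] : ℕ :=
  Module.finrank (FractionRing R) (TensorProduct R (FractionRing R) M)

/-!
STATEMENT 2: For a finitely generated ℕ^r-graded module `M` over `S = K[x_1,…,x_r]`,
there exists `u₀ ∈ ℕ^r` such that `rk_S(M) = HF(M,u) = dim_K M_u` for all `u ≽ u₀`.
-/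

theorem statement2 (K : Type) [Field K] (r : ℕ)
    (M : Type) [AddCommGroup M] [Module (MvPolynomial (Fin r) K) M]
    [Module K M] [IsScalarTower K (MvPolynomial (Fin r) K) M]
    [Module.Finite (MvPolynomial (Fin r) K) M]
    (ℳ : (Fin r →₀ ℕ) → Submodule K M)
    (hM : DirectSum.IsInternal ℳ)
    (hMgr : ∀ (u v : Fin r →₀ ℕ) (c : K) (m : M), m ∈ ℳ v →
      (MvPolynomial.monomial u c) • m ∈ ℳ (u + v)) :
    ∃ u₀ : Fin r →₀ ℕ, ∀ u : Fin r →₀ ℕ, u₀ ≤ u →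
      rk (MvPolynomial (Fin r) K) M = Module.finrank K (ℳ u) := by
  classical
  obtain ⟨T, hT⟩ : ∃ T : Finset M,
      Submodule.span (MvPolynomial (Fin r) K) (T : Set M) = ⊤ :=
    Module.Finite.fg_top (R := MvPolynomial (Fin r) K) (M := M)
  set D := (LinearEquiv.ofBijective (DirectSum.coeLinearMap ℳ) hM).symm with hD
  -- a finite family of homogeneous generators
  let ι : Type := Σ t : {x : M // x ∈ T}, {u : Fin r →₀ ℕ // u ∈ (D t.1).support}
  let g : ι → M := fun i => cmpL ℳ hM i.2.1 i.1.1
  let dg : ι → (Fin r →₀ ℕ) := fun i => i.2.1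
  have hghom : ∀ i, g i ∈ ℳ (dg i) := fun i => cmpL_mem ℳ hM _ _
  have hgspan : Submodule.span (MvPolynomial (Fin r) K) (Set.range g) = ⊤ := by
    rw [eq_top_iff, ← hT, Submodule.span_le]
    intro t ht
    have h1 : t = ∑ u ∈ (D t).support, cmpL ℳ hM u t := (sum_cmpL ℳ hM t).symm
    rw [h1]
    apply Submodule.sum_mem
    intro u hu
    apply Submodule.subset_span
    exact ⟨⟨⟨t, ht⟩, ⟨u, hu⟩⟩, rfl⟩
  -- localization setup
  set S₀ := nonZeroDivisors (MvPolynomial (Fin r) K) with hS₀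
  let f : M →ₗ[MvPolynomial (Fin r) K]
      TensorProduct (MvPolynomial (Fin r) K) (FractionRing (MvPolynomial (Fin r) K)) M :=
    TensorProduct.mk (MvPolynomial (Fin r) K) (FractionRing (MvPolynomial (Fin r) K)) M 1
  haveI hloc : IsLocalizedModule S₀ f :=
    (isLocalizedModule_iff_isBaseChange S₀ (FractionRing (MvPolynomial (Fin r) K)) f).mpr
      (TensorProduct.isBaseChange _ M _)
  have hmemQ : ∀ z : TensorProduct (MvPolynomial (Fin r) K)
      (FractionRing (MvPolynomial (Fin r) K)) M,
      z ∈ Submodule.span (FractionRing (MvPolynomial (Fin r) K)) (f '' Set.range g) := by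
    intro z
    have htop : Submodule.span (MvPolynomial (Fin r) K)
        {t : TensorProduct (MvPolynomial (Fin r) K)
          (FractionRing (MvPolynomial (Fin r) K)) M | ∃ q m, q ⊗ₜ m = t} = ⊤ :=
      TensorProduct.span_tmul_eq_top _ _ M
    have hz : z ∈ (⊤ : Submodule (MvPolynomial (Fin r) K) _) := trivial
    rw [← htop] at hz
    refine Submodule.span_induction ?_ ?_ ?_ ?_ hz
    · rintro _ ⟨q, m, rfl⟩
      have hm : m ∈ Submodule.span (MvPolynomial (Fin r) K) (Set.range g) :=
        hgspan ▸ trivial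
      have h1 : f m ∈ Submodule.span (FractionRing (MvPolynomial (Fin r) K))
          (f '' Set.range g) := by
        have h2 : f m ∈ Submodule.map f
            (Submodule.span (MvPolynomial (Fin r) K) (Set.range g)) :=
          Submodule.mem_map_of_mem hm
        rw [Submodule.map_span] at h2
        have h3 := Submodule.span_le_restrictScalars (MvPolynomial (Fin r) K)
          (FractionRing (MvPolynomial (Fin r) K)) (f '' Set.range g)
        exact h3 h2
      have h2 : q ⊗ₜ[MvPolynomial (Fin r) K] m = q • (f m) := by
        show q ⊗ₜ[MvPolynomial (Fin r) K] m
          = q • ((1 : FractionRing (MvPolynomial (Fin r) K)) ⊗ₜ[MvPolynomial (Fin r) K] m)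
        rw [TensorProduct.smul_tmul', smul_eq_mul, mul_one]
      rw [h2]
      exact Submodule.smul_mem _ _ h1
    · exact Submodule.zero_mem _
    · intro x y _ _ hx hy
      exact Submodule.add_mem _ hx hy
    · intro a x _ hx
      rw [← algebraMap_smul (FractionRing (MvPolynomial (Fin r) K)) a x]
      exact Submodule.smul_mem _ _ hx
  -- choose a basis among images of generators
  obtain ⟨b, hbsub, hbspan, hbli⟩ :=
    exists_linearIndependent (FractionRing (MvPolynomial (Fin r) K)) (f '' Set.range g)
  have hbfin : b.Finite := ((Set.finite_range g).image f).subset hbsub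
  haveI : Fintype b := hbfin.fintype
  have hspan_b : Submodule.span (FractionRing (MvPolynomial (Fin r) K)) b = ⊤ := by
    rw [hbspan, eq_top_iff]
    exact fun z _ => hmemQ z
  let B : Module.Basis b (FractionRing (MvPolynomial (Fin r) K)) _ :=
    Module.Basis.mk hbli (by rw [Subtype.range_coe, hspan_b])
  have hcard : Module.finrank (FractionRing (MvPolynomial (Fin r) K))
      (TensorProduct (MvPolynomial (Fin r) K) (FractionRing (MvPolynomial (Fin r) K)) M)
      = Fintype.card b := Module.finrank_eq_card_basis B
  -- preimages of basis vectors
  have hpre : ∀ x : b, ∃ i : ι, f (g i) = (x : _) := by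
    intro x
    obtain ⟨y, hy, hyx⟩ := hbsub x.2
    obtain ⟨i, rfl⟩ := hy
    exact ⟨i, hyx⟩
  choose cpre hcpre using hpre
  let mm : b → M := fun x => g (cpre x)
  let d : b → (Fin r →₀ ℕ) := fun x => dg (cpre x)
  have hmmhom : ∀ x, mm x ∈ ℳ (d x) := fun x => hghom (cpre x)
  set F := Submodule.span (MvPolynomial (Fin r) K) (Set.range mm) with hF
  -- torsion: a monomial multiple of each generator lies in F
  have htor : ∀ i : ι, ∃ wd : Fin r →₀ ℕ, (monomial wd (1 : K)) • g i ∈ F := by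
    intro i
    have h1 : f (g i) ∈ Submodule.span (FractionRing (MvPolynomial (Fin r) K))
        (Set.range (Subtype.val : b → _)) := by
      rw [Subtype.range_coe, hspan_b]; trivial
    rw [Submodule.mem_span_range_iff_exists_fun] at h1
    obtain ⟨q, hq⟩ := h1
    obtain ⟨s, hs⟩ := IsLocalization.exist_integer_multiples_of_finite S₀ q
    choose a ha using hs
    have key : f ((s : MvPolynomial (Fin r) K) • g i - ∑ x : b, a x • mm x) = 0 := by
      rw [map_sub, map_smul, map_sum, ← hq, Finset.smul_sum, sub_eq_zero]
      apply Finset.sum_congr rfl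
      intro x _
      rw [map_smul, hcpre x, ← smul_assoc, ← ha x, algebraMap_smul]
    obtain ⟨t, ht⟩ := (IsLocalizedModule.eq_zero_iff S₀ f).mp key
    rw [Submonoid.smul_def, smul_sub, sub_eq_zero, ← mul_smul] at ht
    set p := (t : MvPolynomial (Fin r) K) * (s : MvPolynomial (Fin r) K) with hp
    have hpne : p ≠ 0 :=
      nonZeroDivisors.ne_zero (Submonoid.mul_mem _ t.2 s.2)
    have hmem : p • g i ∈ F := by
      rw [ht, Finset.smul_sum]
      apply Submodule.sum_mem
      intro x _
      rw [smul_comm]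
      exact Submodule.smul_mem _ _
        (Submodule.smul_mem _ _ (Submodule.subset_span ⟨x, rfl⟩))
    obtain ⟨wd, hwd⟩ := MvPolynomial.ne_zero_iff.mp hpne
    have h3 : cmpL ℳ hM (wd + dg i) (p • g i) = (monomial wd (coeff wd p)) • g i := by
      rw [cmpL_smul ℳ hM hMgr p (hghom i) (wd + dg i), dif_pos le_add_self,
        add_tsub_cancel_right]
    have h4 : (monomial wd (coeff wd p)) • g i ∈ F := by
      rw [← h3]
      exact cmpL_mem_span ℳ hM hMgr mm d hmmhom hmem _
    refine ⟨wd, ?_⟩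
    have h5 : (monomial wd (1 : K)) • g i
        = (coeff wd p)⁻¹ • ((monomial wd (coeff wd p)) • g i) := by
      rw [← smul_assoc, MvPolynomial.smul_monomial, smul_eq_mul, inv_mul_cancel₀ hwd]
    rw [h5, ← algebraMap_smul (MvPolynomial (Fin r) K) ((coeff wd p)⁻¹)]
    exact Submodule.smul_mem _ _ h4
  choose w hw using htor
  -- the bound
  refine ⟨(∑ i : ι, (w i + dg i)) + (∑ x : b, d x), fun u hu => ?_⟩
  have hwu : ∀ i : ι, w i + dg i ≤ u := by
    intro i
    refine le_trans (le_trans ?_ le_self_add) hu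
    exact Finset.single_le_sum (f := fun i => w i + dg i) (fun j _ => zero_le)
      (Finset.mem_univ i)
  have hdx : ∀ x : b, d x ≤ u := by
    intro x
    refine le_trans (le_trans ?_ le_add_self) hu
    exact Finset.single_le_sum (f := d) (fun j _ => zero_le) (Finset.mem_univ x)
  have hdgi : ∀ i : ι, dg i ≤ u := fun i => le_trans le_add_self (hwu i)
  -- the spanning elements of degree u
  let E : b → M := fun x => (monomial (u - d x) (1 : K)) • mm x
  have hEmem : ∀ x, E x ∈ ℳ u := by
    intro x
    have := hMgr (u - d x) (d x) 1 (mm x) (hmmhom x)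
    rwa [tsub_add_cancel_of_le (hdx x)] at this
  -- E is K-linearly independent
  have hEli : LinearIndependent K E := by
    rw [Fintype.linearIndependent_iff]
    intro cc hcc x
    have h1 : ∀ y : b, cc y • E y = (monomial (u - d y) (cc y)) • mm y := by
      intro y
      show cc y • ((monomial (u - d y) (1 : K)) • mm y) = _
      rw [← smul_assoc, MvPolynomial.smul_monomial, smul_eq_mul, mul_one]
    rw [Finset.sum_congr rfl (fun y _ => h1 y)] at hcc
    have h2 : f (∑ y : b, (monomial (u - d y) (cc y)) • mm y) = 0 := by rw [hcc, map_zero]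
    rw [map_sum] at h2
    have h3 : ∀ y : b, f ((monomial (u - d y) (cc y)) • mm y)
        = (algebraMap (MvPolynomial (Fin r) K) (FractionRing (MvPolynomial (Fin r) K))
            (monomial (u - d y) (cc y))) • (y : _) := by
      intro y
      rw [map_smul, hcpre y, algebraMap_smul]
    rw [Finset.sum_congr rfl (fun y _ => h3 y)] at h2
    have h4 := Fintype.linearIndependent_iff.mp hbli
      (fun y => algebraMap (MvPolynomial (Fin r) K)
        (FractionRing (MvPolynomial (Fin r) K)) (monomial (u - d y) (cc y))) h2 x
    have h5 : (monomial (u - d x) (cc x) : MvPolynomial (Fin r) K) = 0 :=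
      IsFractionRing.injective (MvPolynomial (Fin r) K)
        (FractionRing (MvPolynomial (Fin r) K)) (by rw [h4, map_zero])
    exact MvPolynomial.monomial_eq_zero.mp h5
  -- every element of ℳ u lies in the span of E
  have hspanle : ∀ z ∈ ℳ u, z ∈ Submodule.span K (Set.range E) := by
    intro z hz
    have h1 := mem_spanK ℳ hM hMgr g dg hghom hz (hgspan ▸ trivial)
    refine Submodule.span_le.mpr ?_ h1
    rintro _ ⟨i, rfl⟩
    show (if _ : dg i ≤ u then (monomial (u - dg i) (1 : K)) • g i else 0)
      ∈ Submodule.span K (Set.range E)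
    rw [dif_pos (hdgi i)]
    have hA_F : (monomial (u - dg i) (1 : K)) • g i ∈ F := by
      have hwle : w i ≤ u - dg i := le_tsub_of_add_le_right (hwu i)
      have hsplit : (monomial (u - dg i) (1 : K))
          = (monomial (u - dg i - w i) (1 : K)) * (monomial (w i) (1 : K)) := by
        rw [MvPolynomial.monomial_mul, one_mul, tsub_add_cancel_of_le hwle]
      rw [hsplit, mul_smul]
      exact Submodule.smul_mem _ _ (hw i)
    have hA_u : (monomial (u - dg i) (1 : K)) • g i ∈ ℳ u := by
      have := hMgr (u - dg i) (dg i) 1 (g i) (hghom i)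
      rwa [tsub_add_cancel_of_le (hdgi i)] at this
    have h2 := mem_spanK ℳ hM hMgr mm d hmmhom hA_u hA_F
    have hfun : (fun x : b => if _ : d x ≤ u then (monomial (u - d x) (1 : K)) • mm x else 0)
        = E := by
      funext x
      rw [dif_pos (hdx x)]
    rw [hfun] at h2
    exact h2
  -- conclude
  haveI hfd : FiniteDimensional K (Submodule.span K (Set.range E)) :=
    FiniteDimensional.span_of_finite K (Set.finite_range E)
  have hle1 : Module.finrank K (ℳ u) ≤ Fintype.card b := by
    have hle : ℳ u ≤ Submodule.span K (Set.range E) := fun z hz => hspanle z hz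
    refine le_trans (Submodule.finrank_mono hle) ?_
    refine le_trans (finrank_span_le_card (Set.range E)) ?_
    rw [Set.toFinset_range]
    exact le_trans (Finset.card_image_le) (by simp)
  haveI hfdu : FiniteDimensional K (ℳ u) :=
    Submodule.finiteDimensional_of_le
      (le_trans (fun z hz => hspanle z hz) le_rfl)
  have hge1 : Fintype.card b ≤ Module.finrank K (ℳ u) := by
    have hEli2 : LinearIndependent K (fun x : b => (⟨E x, hEmem x⟩ : ℳ u)) :=
      LinearIndependent.of_comp ((ℳ u).subtype) hEli
    exact hEli2.fintype_card_le_finrank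
  show Module.finrank (FractionRing (MvPolynomial (Fin r) K))
      (TensorProduct (MvPolynomial (Fin r) K)
        (FractionRing (MvPolynomial (Fin r) K)) M) = Module.finrank K (ℳ u)
  rw [hcard]
  exact le_antisymm hge1 hle1 |>.symm ▸ rfl
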